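/- Let Φ : M_D(ℂ) → M_d(ℂ) be a linear map that is a contraction in the sense ‖Φ(X)‖ ≤ ‖X‖ (e.g., the normalized partial trace X ↦ (1/d^{|complement|}) Tr_{T̄}(X) in operator norm). If ‖L‖ ≤ ε < 1 (so exp(L) = I + L + R with ‖R‖ ≤ e^ε − 1 − ε and ‖L + R‖ ≤ e^ε − 1 < 1 when ε < ln 2), then ‖log(Φ(exp L)) − Φ(L)‖ ≤ ln(exp(1−e^ε)/(2−e^ε)) + e^ε − 1 − ε, where log is the power-series matrix logarithm around the identity and Φ(I_D) = I_d. -/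

import Mathlib

open scoped Matrix Nat

attribute [local instance] Matrix.linftyOpNormedAddCommGroup Matrix.linftyOpNormedRing
  Matrix.linftyOpNormedAlgebra

/-- The matrix logarithm `log (I + A)` defined by the power series
`∑_{n ≥ 1} (−1)^{n+1} A^n / n`. -/
noncomputable def matLogOnePlus {n : ℕ} (A : Matrix (Fin n) (Fin n) ℂ) :
    Matrix (Fin n) (Fin n) ℂ :=
  ∑' k : ℕ, (((-1 : ℂ) ^ (k + 2) / (k + 1)) • A ^ (k + 1))

/-- If `Φ : M_D(ℂ) → M_d(ℂ)` is a linear contraction with `Φ(I) = I` (e.g. the normalized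
partial trace), and `‖L‖ ≤ ε < 1` with `ε < ln 2`, then
`‖log(Φ(exp L)) − Φ(L)‖ ≤ ln(exp(1−e^ε)/(2−e^ε)) + e^ε − 1 − ε`, where `log` is the
power-series matrix logarithm around the identity. -/
theorem stmt_12 {D d : ℕ}
    (Φ : Matrix (Fin D) (Fin D) ℂ →ₗ[ℂ] Matrix (Fin d) (Fin d) ℂ)
    (hΦ : ∀ X : Matrix (Fin D) (Fin D) ℂ, ‖Φ X‖ ≤ ‖X‖) (hI : Φ 1 = 1)
    (L : Matrix (Fin D) (Fin D) ℂ) (ε : ℝ)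
    (hε1 : ε < 1) (hεln : ε < Real.log 2) (hL : ‖L‖ ≤ ε) :
    ‖matLogOnePlus (Φ (NormedSpace.exp L) - 1) - Φ L‖ ≤
      Real.log (Real.exp (1 - Real.exp ε) / (2 - Real.exp ε)) + Real.exp ε - 1 - ε := by
  have hε0 : (0:ℝ) ≤ ε := le_trans (norm_nonneg L) hL
  have he2 : Real.exp ε < 2 := by
    calc Real.exp ε < Real.exp (Real.log 2) := Real.exp_lt_exp.2 hεln
    _ = 2 := Real.exp_log (by norm_num)
  have he1 : (1:ℝ) ≤ Real.exp ε := Real.one_le_exp hε0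
  set b : ℝ := Real.exp ε - 1 with hb
  have hb0 : 0 ≤ b := by linarith
  have hb1 : b < 1 := by linarith
  -- exp remainder
  set R : Matrix (Fin D) (Fin D) ℂ := NormedSpace.exp L - 1 - L with hR
  have hexp : HasSum (fun n : ℕ => ((n ! : ℂ))⁻¹ • L ^ n) (NormedSpace.exp L) :=
    NormedSpace.exp_series_hasSum_exp' (𝕂 := ℂ) L
  have hexp2 : HasSum (fun n : ℕ => (((n+2)! : ℂ))⁻¹ • L ^ (n+2)) R := by
    have := (hasSum_nat_add_iff' (f := fun n : ℕ => ((n ! : ℂ))⁻¹ • L ^ n) 2).mpr hexp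
    simp only [Finset.sum_range_succ, Finset.sum_range_zero] at this
    norm_num at this
    convert this using 1
    · rfl
    rw [hR]; abel
  have hrexp : HasSum (fun n : ℕ => ε ^ n / n !) (Real.exp ε) := by
    rw [Real.exp_eq_exp_ℝ]
    exact NormedSpace.expSeries_div_hasSum_exp ε
  have hrexp2 : HasSum (fun n : ℕ => ε ^ (n+2) / (n+2)!) (Real.exp ε - 1 - ε) := by
    have := (hasSum_nat_add_iff' (f := fun n : ℕ => ε ^ n / n !) 2).mpr hrexp
    simp only [Finset.sum_range_succ, Finset.sum_range_zero] at this
    norm_num at this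
    convert this using 1
    · rfl
    ring
  have hRnorm : ‖R‖ ≤ Real.exp ε - 1 - ε := by
    rw [hexp2.tsum_eq.symm]
    refine tsum_of_norm_bounded hrexp2 (fun n => ?_)
    rw [norm_smul]
    have h1 : ‖(((n+2)! : ℂ))⁻¹‖ = ((n+2)! : ℝ)⁻¹ := by
      rw [norm_inv]
      norm_cast
    rw [h1, div_eq_inv_mul]
    have hLn : ‖L ^ (n+2)‖ ≤ ε ^ (n+2) :=
      (norm_pow_le' L (by omega)).trans (pow_le_pow_left₀ (norm_nonneg L) hL _)
    exact mul_le_mul_of_nonneg_left hLn (by positivity)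
  -- A
  set A : Matrix (Fin d) (Fin d) ℂ := Φ (NormedSpace.exp L) - 1 with hA
  have hAeq : A = Φ L + Φ R := by
    have : NormedSpace.exp L = 1 + L + R := by rw [hR]; abel
    rw [hA, this, map_add, map_add, hI]; abel
  have hAnorm : ‖A‖ ≤ b := by
    rw [hAeq]
    calc ‖Φ L + Φ R‖ ≤ ‖Φ L‖ + ‖Φ R‖ := norm_add_le _ _
    _ ≤ ‖L‖ + ‖R‖ := add_le_add (hΦ _) (hΦ _)
    _ ≤ ε + (Real.exp ε - 1 - ε) := add_le_add hL hRnorm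
    _ = b := by rw [hb]; ring
  -- log series
  set f : ℕ → Matrix (Fin d) (Fin d) ℂ :=
    fun k => (((-1 : ℂ) ^ (k + 2) / (k + 1)) • A ^ (k + 1)) with hf
  have hfb : ∀ k : ℕ, ‖f k‖ ≤ b ^ (k+1) / (k+1) := by
    intro k
    rw [hf]
    simp only
    rw [norm_smul, norm_div, norm_pow, norm_neg, norm_one, one_pow, one_div]
    have h1 : ‖((k:ℂ) + 1)‖ = (k:ℝ) + 1 := by
      rw [show ((k:ℂ)+1) = ((k+1 : ℕ) : ℂ) by push_cast; ring, RCLike.norm_natCast]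
      push_cast; ring
    rw [h1, inv_mul_eq_div]
    have hAn : ‖A ^ (k+1)‖ ≤ b ^ (k+1) :=
      (norm_pow_le' A (by omega)).trans (pow_le_pow_left₀ (norm_nonneg A) hAnorm _)
    gcongr
  have hfsummable : Summable f := by
    apply Summable.of_norm
    have hle : ∀ k : ℕ, ‖f k‖ ≤ b * b ^ k := by
      intro k
      refine (hfb k).trans ?_
      calc b ^ (k+1) / (k+1) ≤ b ^ (k+1) :=
            div_le_self (by positivity) (by exact_mod_cast Nat.succ_le_succ (Nat.zero_le k))
      _ = b * b ^ k := by rw [pow_succ]; ring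
    exact Summable.of_nonneg_of_le (fun k => norm_nonneg _) hle
      ((summable_geometric_of_lt_one hb0 hb1).mul_left b)
  have hlog1 : matLogOnePlus A = f 0 + ∑' k, f (k+1) := by
    rw [matLogOnePlus]
    exact Summable.tsum_eq_zero_add hfsummable
  have hf0 : f 0 = A := by rw [hf]; norm_num
  -- log real series
  have hrlog : HasSum (fun k : ℕ => b ^ (k+1) / (k+1)) (-Real.log (1 - b)) :=
    Real.hasSum_pow_div_log_of_abs_lt_one (by rw [abs_of_nonneg hb0]; exact hb1)
  have hrlog2 : HasSum (fun k : ℕ => b ^ (k+2) / (k+2)) (-Real.log (1 - b) - b) := by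
    have := (hasSum_nat_add_iff' (f := fun k : ℕ => b ^ (k+1) / (k+1)) 1).mpr hrlog
    simp only [Finset.sum_range_one] at this
    norm_num at this
    convert this using 2 with k
    · rfl
    all_goals push_cast; ring_nf
  have hlogtail : ‖matLogOnePlus A - A‖ ≤ -Real.log (1 - b) - b := by
    rw [hlog1, hf0]
    rw [show A + ∑' k, f (k+1) - A = ∑' k, f (k+1) by abel]
    refine tsum_of_norm_bounded hrlog2 (fun k => ?_)
    have := hfb (k+1)
    convert this using 2 <;> push_cast <;> ring
  -- assemble
  have key : ‖matLogOnePlus A - Φ L‖ ≤ (-Real.log (1 - b) - b) + (Real.exp ε - 1 - ε) := by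
    have : matLogOnePlus A - Φ L = (matLogOnePlus A - A) + Φ R := by
      rw [hAeq]; abel
    rw [this]
    calc ‖(matLogOnePlus A - A) + Φ R‖ ≤ ‖matLogOnePlus A - A‖ + ‖Φ R‖ := norm_add_le _ _
    _ ≤ (-Real.log (1 - b) - b) + (Real.exp ε - 1 - ε) :=
        add_le_add hlogtail ((hΦ R).trans hRnorm)
  refine key.trans (le_of_eq ?_)
  have h2e : (0:ℝ) < 2 - Real.exp ε := by linarith
  rw [Real.log_div (Real.exp_ne_zero _) (ne_of_gt h2e), Real.log_exp]
  have : (1 : ℝ) - b = 2 - Real.exp ε := by rw [hb]; ring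
  rw [this]
  ring
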